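/- If i < n satisfies max(DY i) > α, then every value v ∈ DY i with v < max(DY i) is inconsistent (i.e., not consistent). -/

import Mathlib

namespace MsetPaper

/-- The maximum element of a multiset of naturals (`0` for the empty multiset). -/
def mmax (s : Multiset ℕ) : ℕ := s.sup

/-- The strict multiset order `x <ₘ y` of the paper: either `x` is empty and `y` is not,
or both are nonempty and either `max x < max y`, or the maxima agree and the multisets
with one occurrence of the maximum removed are again strictly ordered. -/
inductive MLt : Multiset ℕ → Multiset ℕ → Prop
  | empty {y : Multiset ℕ} : y ≠ 0 → MLt 0 y
  | maxLt {x y : Multiset ℕ} : x ≠ 0 → y ≠ 0 → mmax x < mmax y → MLt x y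
  | maxEq {x y : Multiset ℕ} : x ≠ 0 → y ≠ 0 → mmax x = mmax y →
      MLt (x.erase (mmax x)) (y.erase (mmax y)) → MLt x y

/-- The (non-strict) multiset order `x ≤ₘ y`. -/
def MLe (x y : Multiset ℕ) : Prop := MLt x y ∨ x = y

/-- The multiset of values taken by a vector. -/
def msetOf {n : ℕ} (x : Fin n → ℕ) : Multiset ℕ := (List.ofFn x : List ℕ)

/-- `(x, y)` is a satisfying assignment for the constraint `X ≤ₘ Y`. -/
def SatLe {n : ℕ} (DX DY : Fin n → Finset ℕ) (x y : Fin n → ℕ) : Prop :=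
  (∀ i, x i ∈ DX i) ∧ (∀ i, y i ∈ DY i) ∧ MLe (msetOf x) (msetOf y)

/-- The value `v` is consistent for the variable `X i`. -/
def ConsX {n : ℕ} (DX DY : Fin n → Finset ℕ) (i : Fin n) (v : ℕ) : Prop :=
  ∃ x y, SatLe DX DY x y ∧ x i = v

/-- The value `v` is consistent for the variable `Y i`. -/
def ConsY {n : ℕ} (DX DY : Fin n → Finset ℕ) (i : Fin n) (v : ℕ) : Prop :=
  ∃ x y, SatLe DX DY x y ∧ y i = v

/-- The constraint `X ≤ₘ Y` is generalised arc-consistent. -/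
def GACLe {n : ℕ} (DX DY : Fin n → Finset ℕ) : Prop :=
  (∀ i, ∀ v ∈ DX i, ConsX DX DY i v) ∧ (∀ i, ∀ v ∈ DY i, ConsY DX DY i v)

/-- `cx DX hDX v` counts the indices `i` with `min (DX i) = v`
(the occurrence vector of `floor(X)`). -/
def cx {n : ℕ} (DX : Fin n → Finset ℕ) (hDX : ∀ i, (DX i).Nonempty) (v : ℕ) : ℕ :=
  (Finset.univ.filter fun i => (DX i).min' (hDX i) = v).card

/-- `cy DY hDY v` counts the indices `i` with `max (DY i) = v`
(the occurrence vector of `ceiling(Y)`). -/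
def cy {n : ℕ} (DY : Fin n → Finset ℕ) (hDY : ∀ i, (DY i).Nonempty) (v : ℕ) : ℕ :=
  (Finset.univ.filter fun i => (DY i).max' (hDY i) = v).card

/-! ### Auxiliary lemmas -/

def DLt (s t : Multiset ℕ) : Prop :=
  ∃ β, s.count β < t.count β ∧ ∀ b, β < b → s.count b = t.count b

lemma mmax_mem {s : Multiset ℕ} (h : s ≠ 0) : mmax s ∈ s := by
  induction s using Multiset.induction with
  | empty => simp at h
  | cons a s ih =>
    simp only [mmax, Multiset.sup_cons] at *
    rcases eq_or_ne s 0 with rfl | hs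
    · simp
    · rcases le_total a s.sup with hle | hle
      · rw [sup_eq_right.mpr hle]; exact Multiset.mem_cons_of_mem (ih hs)
      · rw [sup_eq_left.mpr hle]; exact Multiset.mem_cons_self a s

lemma le_mmax {s : Multiset ℕ} {a : ℕ} (h : a ∈ s) : a ≤ mmax s := Multiset.le_sup h

lemma count_of_mmax_lt {s : Multiset ℕ} {b : ℕ} (h : mmax s < b) : s.count b = 0 :=
  Multiset.count_eq_zero.mpr fun hm => absurd (le_mmax hm) (not_le.mpr h)

lemma MLt_imp_DLt {s t : Multiset ℕ} (h : MLt s t) : DLt s t := by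
  induction h with
  | @empty y hy =>
    refine ⟨mmax y, ?_, fun b hb => ?_⟩
    · simpa using Multiset.count_pos.mpr (mmax_mem hy)
    · simp [count_of_mmax_lt hb]
  | @maxLt x y hx hy hlt =>
    refine ⟨mmax y, ?_, fun b hb => ?_⟩
    · rw [count_of_mmax_lt hlt]
      exact Multiset.count_pos.mpr (mmax_mem hy)
    · rw [count_of_mmax_lt hb, count_of_mmax_lt (lt_trans hlt hb)]
  | @maxEq x y hx hy heq _ ih =>
    obtain ⟨β, h1, h2⟩ := ih
    rw [heq] at h1 h2
    set m := mmax y with hm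
    clear_value m
    have hmx : m ∈ x := heq ▸ mmax_mem hx
    have hmy : m ∈ y := hm.symm ▸ mmax_mem hy
    have hcx : 0 < x.count m := Multiset.count_pos.mpr hmx
    have hcy : 0 < y.count m := Multiset.count_pos.mpr hmy
    refine ⟨β, ?_, fun b hb => ?_⟩
    · rcases eq_or_ne β m with rfl | hne
      · rw [Multiset.count_erase_self, Multiset.count_erase_self] at h1; omega
      · rwa [Multiset.count_erase_of_ne hne, Multiset.count_erase_of_ne hne] at h1
    · have h2b := h2 b hb
      rcases eq_or_ne b m with rfl | hne
      · rw [Multiset.count_erase_self, Multiset.count_erase_self] at h2b; omega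
      · rwa [Multiset.count_erase_of_ne hne, Multiset.count_erase_of_ne hne] at h2b

lemma DLt_imp_MLt : ∀ (N : ℕ) (s t : Multiset ℕ), Multiset.card t ≤ N → DLt s t → MLt s t := by
  intro N
  induction N with
  | zero =>
    rintro s t hc ⟨β, h1, _⟩
    have ht : t = 0 := by
      have := Multiset.card_eq_zero.mp (le_antisymm hc (Nat.zero_le _))
      exact this
    subst ht; simp at h1
  | succ N ih =>
    rintro s t hc ⟨β, h1, h2⟩
    have hβt : β ∈ t := Multiset.count_pos.mp (lt_of_le_of_lt (Nat.zero_le _) h1)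
    have ht : t ≠ 0 := fun h => by subst h; simp at hβt
    rcases eq_or_ne s 0 with rfl | hs
    · exact MLt.empty ht
    · have hle : mmax s ≤ mmax t := by
        by_contra hlt
        push_neg at hlt
        have hβ : β ≤ mmax t := le_mmax hβt
        have he := h2 (mmax s) (lt_of_le_of_lt hβ hlt)
        have hz : t.count (mmax s) = 0 := count_of_mmax_lt hlt
        have hp : 0 < s.count (mmax s) := Multiset.count_pos.mpr (mmax_mem hs)
        omega
      rcases lt_or_eq_of_le hle with hlt | heq
      · exact MLt.maxLt hs ht hlt
      · refine MLt.maxEq hs ht heq ?_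
        have hms : mmax s ∈ s := mmax_mem hs
        have hmt : mmax t ∈ t := mmax_mem ht
        have hcard : Multiset.card (t.erase (mmax t)) ≤ N := by
          have := Multiset.card_erase_lt_of_mem hmt
          omega
        apply ih _ _ hcard
        rw [heq]
        set m := mmax t with hm
        clear_value m
        have hcy : 0 < t.count m := Multiset.count_pos.mpr hmt
        have hcx : 0 < s.count m := Multiset.count_pos.mpr (heq ▸ hms)
        refine ⟨β, ?_, fun b hb => ?_⟩
        · rcases eq_or_ne β m with rfl | hne
          · rw [Multiset.count_erase_self, Multiset.count_erase_self]; omega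
          · rwa [Multiset.count_erase_of_ne hne, Multiset.count_erase_of_ne hne]
        · have h2b := h2 b hb
          rcases eq_or_ne b m with rfl | hne
          · rw [Multiset.count_erase_self, Multiset.count_erase_self]; omega
          · rwa [Multiset.count_erase_of_ne hne, Multiset.count_erase_of_ne hne]

lemma DLt_irrefl (s : Multiset ℕ) : ¬ DLt s s := by
  rintro ⟨β, h1, _⟩; omega

lemma DLt_asymm {s t : Multiset ℕ} (h : DLt s t) : ¬ DLt t s := by
  rintro ⟨β', h1', h2'⟩
  obtain ⟨β, h1, h2⟩ := h
  rcases lt_trichotomy β β' with hlt | rfl | hlt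
  · have := h2 β' hlt; omega
  · omega
  · have := h2' β hlt; omega

lemma DLt_trans {s t u : Multiset ℕ} (h1 : DLt s t) (h2 : DLt t u) : DLt s u := by
  obtain ⟨β1, ha1, ha2⟩ := h1
  obtain ⟨β2, hb1, hb2⟩ := h2
  rcases lt_trichotomy β1 β2 with hlt | rfl | hlt
  · exact ⟨β2, by have := ha2 β2 hlt; omega,
      fun b hb => by rw [ha2 b (lt_trans hlt hb), hb2 b hb]⟩
  · exact ⟨β1, by omega, fun b hb => by rw [ha2 b hb, hb2 b hb]⟩
  · exact ⟨β1, by have := hb2 β1 hlt; omega,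
      fun b hb => by rw [ha2 b hb, hb2 b (lt_trans hlt hb)]⟩

lemma MLe_iff {s t : Multiset ℕ} : MLe s t ↔ DLt s t ∨ s = t :=
  ⟨fun h => h.imp MLt_imp_DLt id,
   fun h => h.imp (fun hd => DLt_imp_MLt _ s t le_rfl hd) id⟩

lemma MLe_trans {s t u : Multiset ℕ} (h1 : MLe s t) (h2 : MLe t u) : MLe s u := by
  rw [MLe_iff] at *
  rcases h1 with h1 | rfl
  · rcases h2 with h2 | rfl
    · exact Or.inl (DLt_trans h1 h2)
    · exact Or.inl h1
  · exact h2

/-! ### Counting -/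

lemma msetOf_eq_map {n : ℕ} (w : Fin n → ℕ) : msetOf w = Multiset.map w Finset.univ.val := by
  simp [msetOf, List.ofFn_eq_map]

lemma count_msetOf {n : ℕ} (w : Fin n → ℕ) (b : ℕ) :
    (msetOf w).count b = (Finset.univ.filter fun j => w j = b).card := by
  rw [msetOf_eq_map, Multiset.count_map]
  have : (Finset.univ.filter fun j => w j = b).card
      = Multiset.card (Multiset.filter (fun j => w j = b) Finset.univ.val) := rfl
  rw [this]
  congr 1
  simp [eq_comm]

lemma countP_msetOf {n : ℕ} (w : Fin n → ℕ) (p : ℕ → Prop) [DecidablePred p] :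
    (msetOf w).countP p = (Finset.univ.filter fun j => p (w j)).card := by
  rw [msetOf_eq_map, Multiset.countP_map]
  rfl

def gcnt (s : Multiset ℕ) (b : ℕ) : ℕ := s.countP (b ≤ ·)

lemma gcnt_step (s : Multiset ℕ) (b : ℕ) : gcnt s b = s.count b + gcnt s (b + 1) := by
  induction s using Multiset.induction with
  | empty => simp [gcnt]
  | cons a s ih =>
    simp only [gcnt, Multiset.countP_cons, Multiset.count_cons] at *
    split_ifs <;> omega

lemma gcnt_zero {s : Multiset ℕ} {b : ℕ} (h : mmax s < b) : gcnt s b = 0 := by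
  rw [gcnt, Multiset.countP_eq_zero]
  intro a ha
  have := le_mmax ha
  omega

lemma gcnt_main {s t : Multiset ℕ} (hg : ∀ b, gcnt s b ≤ gcnt t b) : s = t ∨ DLt s t := by
  by_cases hst : s = t
  · exact Or.inl hst
  right
  set M := mmax s ⊔ mmax t with hM
  have hbound : ∀ b, s.count b ≠ t.count b → b ≤ M := by
    intro b hb
    by_contra hbM
    push_neg at hbM
    have h1 : s.count b = 0 := count_of_mmax_lt (lt_of_le_of_lt le_sup_left hbM)
    have h2 : t.count b = 0 := count_of_mmax_lt (lt_of_le_of_lt le_sup_right hbM)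
    omega
  have hex : ∃ b, s.count b ≠ t.count b := by
    by_contra h
    push_neg at h
    exact hst (Multiset.ext.mpr fun a => h a)
  obtain ⟨b0, hb0⟩ := hex
  set T := (Finset.range (M + 1)).filter fun b => s.count b ≠ t.count b with hT
  have hTne : T.Nonempty := ⟨b0, by
    simp only [hT, Finset.mem_filter, Finset.mem_range]
    exact ⟨Nat.lt_succ_of_le (hbound b0 hb0), hb0⟩⟩
  set β := T.max' hTne with hβ
  have hβT : β ∈ T := T.max'_mem hTne
  have hβne : s.count β ≠ t.count β := (Finset.mem_filter.mp hβT).2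
  have hup : ∀ c, β < c → s.count c = t.count c := by
    intro c hc
    by_contra hne
    have hcT : c ∈ T := by
      simp only [hT, Finset.mem_filter, Finset.mem_range]
      exact ⟨Nat.lt_succ_of_le (hbound c hne), hne⟩
    exact absurd (Finset.le_max' T c hcT) (not_le.mpr hc)
  have htail : ∀ d c, M + 1 ≤ c + d → β < c → gcnt s c = gcnt t c := by
    intro d
    induction d with
    | zero =>
      intro c h1 _
      rw [gcnt_zero (by omega : mmax s < c), gcnt_zero (by omega : mmax t < c)]
    | succ d ihd =>
      intro c h1 h2
      rcases le_or_gt c M with hcM | hcM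
      · rw [gcnt_step s c, gcnt_step t c, hup c h2, ihd (c + 1) (by omega) (by omega)]
      · rw [gcnt_zero (by omega : mmax s < c), gcnt_zero (by omega : mmax t < c)]
  have hts : gcnt s (β + 1) = gcnt t (β + 1) := htail (M + 1) (β + 1) (by omega) (by omega)
  have hgs := gcnt_step s β
  have hgt := gcnt_step t β
  have hgle := hg β
  refine ⟨β, by omega, hup⟩

lemma pointwise_MLe {n : ℕ} (u w : Fin n → ℕ) (h : ∀ j, u j ≤ w j) :
    MLe (msetOf u) (msetOf w) := by
  rw [MLe_iff]
  have hg : ∀ b, gcnt (msetOf u) b ≤ gcnt (msetOf w) b := by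
    intro b
    rw [gcnt, gcnt, countP_msetOf, countP_msetOf]
    apply Finset.card_le_card
    intro j hj
    simp only [Finset.mem_filter, Finset.mem_univ, true_and] at hj ⊢
    exact le_trans hj (h j)
  rcases gcnt_main hg with he | hd
  · exact Or.inr he
  · exact Or.inl hd

/-- If `max(DY i) > α` then every value of `DY i` below `max(DY i)` is inconsistent. -/
theorem stmt15 (n : ℕ) (hn : 1 ≤ n) (DX DY : Fin n → Finset ℕ)
    (hDX : ∀ i, (DX i).Nonempty) (hDY : ∀ i, (DY i).Nonempty)
    (α : ℕ)
    (hα1 : cx DX hDX α < cy DY hDY α)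
    (hα2 : ∀ b : ℕ, α < b → cx DX hDX b = cy DY hDY b)
    (i : Fin n) (hi : α < (DY i).max' (hDY i)) :
    ∀ v ∈ DY i, v < (DY i).max' (hDY i) → ¬ ConsY DX DY i v := by
  intro v hv hvlt hcons
  obtain ⟨x, y, ⟨hx, hy, hxy⟩, hyi⟩ := hcons
  set β := (DY i).max' (hDY i) with hβ
  set F : Fin n → ℕ := fun j => (DX j).min' (hDX j) with hF
  set C : Fin n → ℕ := fun j => if j = i then v else (DY j).max' (hDY j) with hC
  have h1 : MLe (msetOf F) (msetOf x) :=
    pointwise_MLe _ _ fun j => Finset.min'_le _ _ (hx j)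
  have h3 : MLe (msetOf y) (msetOf C) := by
    apply pointwise_MLe
    intro j
    by_cases hj : j = i
    · subst hj; simp [hC, hyi]
    · simp only [hC, hj, if_false]
      exact Finset.le_max' _ _ (hy j)
  have hFC : MLe (msetOf F) (msetOf C) := MLe_trans (MLe_trans h1 hxy) h3
  have hcountF : ∀ b, (msetOf F).count b = cx DX hDX b := by
    intro b; rw [count_msetOf]; rfl
  have hCi : C i = v := by simp [hC]
  have hCne : ∀ j, j ≠ i → C j = (DY j).max' (hDY j) := by
    intro j hj; simp [hC, hj]
  have hCF : DLt (msetOf C) (msetOf F) := by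
    refine ⟨β, ?_, ?_⟩
    · rw [count_msetOf, hcountF, hα2 β hi]
      have hins : (Finset.univ.filter fun j => (DY j).max' (hDY j) = β)
          = insert i (Finset.univ.filter fun j => C j = β) := by
        ext j
        simp only [Finset.mem_filter, Finset.mem_univ, true_and, Finset.mem_insert]
        by_cases hj : j = i
        · subst hj
          simp [hCi]
          exact hβ.symm
        · simp [hj, hCne j hj]
      have hnotmem : i ∉ (Finset.univ.filter fun j => C j = β) := by
        simp [hCi]
        omega
      have : cy DY hDY β = (Finset.univ.filter fun j => C j = β).card + 1 := by
        rw [cy, hins, Finset.card_insert_of_notMem hnotmem]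
      omega
    · intro b hb
      rw [count_msetOf, hcountF, hα2 b (lt_trans hi hb)]
      have hfe : (Finset.univ.filter fun j => C j = b)
          = (Finset.univ.filter fun j => (DY j).max' (hDY j) = b) := by
        ext j
        simp only [Finset.mem_filter, Finset.mem_univ, true_and]
        by_cases hj : j = i
        · subst hj
          rw [hCi, ← hβ]
          constructor
          · intro h; omega
          · intro h; omega
        · rw [hCne j hj]
      rw [hfe]
      rfl
  rcases hFC with hlt | heq
  · exact DLt_asymm hCF (MLt_imp_DLt hlt)
  · rw [heq] at hCF
    exact DLt_irrefl _ hCF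

end MsetPaper
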